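/- For every triple (φ₀, γ₀, τ₀) ∈ Ω satisfying φ₀ = −1/2 (i.e., every point on the face F₁ of the polyhedron Ω), there exists a copula C together with a copula measure μ of C such that φ(C) = φ₀, γ(C) = γ₀, and 4·∫_{[0,1]²} C dμ − 1 = τ₀. -/

import Mathlib

open MeasureTheory Set

/-- A bivariate copula, viewed as a real function of two variables whose defining
properties are required on the unit square. -/
def IsCopula (C : ℝ → ℝ → ℝ) : Prop :=
  (∀ v ∈ Icc (0:ℝ) 1, C 0 v = 0) ∧
  (∀ u ∈ Icc (0:ℝ) 1, C u 0 = 0) ∧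
  (∀ u ∈ Icc (0:ℝ) 1, C u 1 = u) ∧
  (∀ v ∈ Icc (0:ℝ) 1, C 1 v = v) ∧
  (∀ u₁ u₂ v₁ v₂ : ℝ, 0 ≤ u₁ → u₁ ≤ u₂ → u₂ ≤ 1 → 0 ≤ v₁ → v₁ ≤ v₂ → v₂ ≤ 1 →
    0 ≤ C u₂ v₂ - C u₂ v₁ - C u₁ v₂ + C u₁ v₁)

/-- Spearman's rho: ρ(C) = 12·∫₀¹∫₀¹ C(u,v) du dv − 3. -/
noncomputable def spearmanRho (C : ℝ → ℝ → ℝ) : ℝ :=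
  12 * (∫ u in (0:ℝ)..1, ∫ v in (0:ℝ)..1, C u v) - 3

/-- Spearman's footrule: φ(C) = 6·∫₀¹ C(u,u) du − 2. -/
noncomputable def footrule (C : ℝ → ℝ → ℝ) : ℝ :=
  6 * (∫ u in (0:ℝ)..1, C u u) - 2

/-- Gini's gamma: γ(C) = 4·∫₀¹ C(u,u) du + 4·∫₀¹ C(u,1−u) du − 2. -/
noncomputable def giniGamma (C : ℝ → ℝ → ℝ) : ℝ :=
  4 * (∫ u in (0:ℝ)..1, C u u) + 4 * (∫ u in (0:ℝ)..1, C u (1 - u)) - 2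

/-- Blomqvist's beta: β(C) = 4·C(1/2,1/2) − 1. -/
noncomputable def blomqvistBeta (C : ℝ → ℝ → ℝ) : ℝ :=
  4 * C (1/2) (1/2) - 1

/-- A copula measure of a copula `C`: a probability measure on the plane with
μ([0,u]×[0,v]) = C(u,v) for u,v in the unit interval. -/
def IsCopulaMeasure (C : ℝ → ℝ → ℝ) (μ : Measure (ℝ × ℝ)) : Prop :=
  IsProbabilityMeasure μ ∧
  ∀ u ∈ Icc (0:ℝ) 1, ∀ v ∈ Icc (0:ℝ) 1,
    μ (Icc 0 u ×ˢ Icc 0 v) = ENNReal.ofReal (C u v)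

/-- Kendall's tau expressed via a copula measure μ of C:
τ(C) = 4·∫_{[0,1]²} C dμ − 1. -/
noncomputable def kendallTauInt (C : ℝ → ℝ → ℝ) (μ : Measure (ℝ × ℝ)) : ℝ :=
  4 * (∫ p in Icc (0:ℝ) 1 ×ˢ Icc (0:ℝ) 1, C p.1 p.2 ∂μ) - 1

/-- `B` is the ordinal sum of the copulas `Bk k` with respect to the pairwise disjoint
open subintervals `(a k, b k)` of `[0,1]`. -/
def IsOrdinalSum {n : ℕ} (a b : Fin n → ℝ) (Bk : Fin n → ℝ → ℝ → ℝ)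
    (B : ℝ → ℝ → ℝ) : Prop :=
  (∀ k, 0 ≤ a k ∧ a k ≤ b k ∧ b k ≤ 1) ∧
  (Pairwise fun i j => Disjoint (Ioo (a i) (b i)) (Ioo (a j) (b j))) ∧
  (∀ k, ∀ u ∈ Icc (a k) (b k), ∀ v ∈ Icc (a k) (b k),
    B u v = a k + (b k - a k) * Bk k ((u - a k) / (b k - a k)) ((v - a k) / (b k - a k))) ∧
  (∀ u ∈ Icc (0:ℝ) 1, ∀ v ∈ Icc (0:ℝ) 1,
    (∀ k, ¬(u ∈ Icc (a k) (b k) ∧ v ∈ Icc (a k) (b k))) → B u v = min u v)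

/-- The polyhedron Ω in ℝ³ (coordinates (φ, γ, τ)). -/
def Omega : Set (ℝ × ℝ × ℝ) :=
  {p | -2 * p.1 ≤ 1 ∧
       -8 * p.1 + 6 * p.2.1 ≤ 1 ∧
       -2 * p.1 + 3 * p.2.1 ≤ 1 ∧
       4 * p.1 - 3 * p.2.2 ≤ 1 ∧
       -2 * p.1 + 3 * p.2.2 ≤ 1 ∧
       -2 * p.1 + 3 * p.2.1 - 3 * p.2.2 ≤ 1 ∧
       4 * p.1 - 6 * p.2.1 + 3 * p.2.2 ≤ 1}


/-- Segment-length functions: mass of `[0,u]×[0,v]` under the three kinds of segments. -/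
noncomputable def mm1 (u v : ℝ) : ℝ := max 0 (min (min u (v - 1/2)) (1/2))
noncomputable def mm2 (l u v : ℝ) : ℝ := max 0 (min (l/2) u - max 0 ((1+l)/2 - v))
noncomputable def mm3 (l u v : ℝ) : ℝ := max 0 (min (1/2) u - max (l/2) (1 + l/2 - v))

/-- The copula realizing points of the face `F₁`. -/
noncomputable def Cop (s l u v : ℝ) : ℝ :=
  s * (mm1 u v + mm1 v u) + (1-s) * (mm2 l u v + mm3 l u v + mm2 l v u + mm3 l v u)

lemma mm1_nonneg (u v : ℝ) : 0 ≤ mm1 u v := le_max_left _ _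
lemma mm2_nonneg (l u v : ℝ) : 0 ≤ mm2 l u v := le_max_left _ _
lemma mm3_nonneg (l u v : ℝ) : 0 ≤ mm3 l u v := le_max_left _ _

lemma Cop_nonneg {s l : ℝ} (hs0 : 0 ≤ s) (hs1 : s ≤ 1) (u v : ℝ) : 0 ≤ Cop s l u v := by
  have := mm1_nonneg u v; have := mm1_nonneg v u
  have := mm2_nonneg l u v; have := mm2_nonneg l v u
  have := mm3_nonneg l u v; have := mm3_nonneg l v u
  unfold Cop; nlinarith

lemma Cop_symm (s l u v : ℝ) : Cop s l u v = Cop s l v u := by unfold Cop; ring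

lemma Cop_continuous (s l : ℝ) : Continuous fun p : ℝ × ℝ => Cop s l p.1 p.2 := by
  unfold Cop mm1 mm2 mm3; fun_prop

/-- `C(u,0)=0`. -/
lemma Cop_zero_right {s l : ℝ} (hl0 : 0 ≤ l) (hl1 : l ≤ 1/2) (u : ℝ) (hu0 : 0 ≤ u)
    (hu1 : u ≤ 1) : Cop s l u 0 = 0 := by
  have h1 : mm1 u 0 = 0 := by
    unfold mm1
    refine max_eq_left ?_
    have := min_le_right (min u ((0:ℝ) - 1/2)) (1/2)
    have := min_le_right u ((0:ℝ) - 1/2)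
    have := min_le_left (min u ((0:ℝ) - 1/2)) (1/2)
    linarith
  have h2 : mm1 0 u = 0 := by
    unfold mm1
    refine max_eq_left ?_
    have := min_le_left (min (0:ℝ) (u - 1/2)) (1/2)
    have := min_le_left (0:ℝ) (u - 1/2)
    linarith
  have h3 : mm2 l u 0 = 0 := by
    unfold mm2
    refine max_eq_left ?_
    have := min_le_left (l/2) u
    have := le_max_right (0:ℝ) ((1+l)/2 - 0)
    linarith
  have h4 : mm2 l 0 u = 0 := by
    unfold mm2
    refine max_eq_left ?_
    have := min_le_right (l/2) (0:ℝ)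
    have := le_max_left (0:ℝ) ((1+l)/2 - u)
    linarith
  have h5 : mm3 l u 0 = 0 := by
    unfold mm3
    refine max_eq_left ?_
    have := min_le_left (1/2:ℝ) u
    have := le_max_right (l/2) (1 + l/2 - 0)
    linarith
  have h6 : mm3 l 0 u = 0 := by
    unfold mm3
    refine max_eq_left ?_
    have := min_le_right (1/2:ℝ) (0:ℝ)
    have := le_max_left (l/2) (1 + l/2 - u)
    linarith
  unfold Cop; rw [h1, h2, h3, h4, h5, h6]; ring

/-- `C(u,1)=u`. -/
lemma Cop_one_right {s l : ℝ} (hl0 : 0 ≤ l) (hl1 : l ≤ 1/2) (u : ℝ) (hu0 : 0 ≤ u)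
    (hu1 : u ≤ 1) : Cop s l u 1 = u := by
  have hm1 : mm1 u 1 + mm1 1 u = u := by
    unfold mm1
    rw [min_eq_right (by linarith : u - 1/2 ≤ (1:ℝ)), min_eq_left (by linarith : u - 1/2 ≤ (1:ℝ)/2)]
    rcases le_total u (1/2) with h | h
    · rw [min_eq_left (by linarith : u ≤ (1:ℝ) - 1/2), min_eq_left (by linarith : u ≤ (1:ℝ)/2),
        max_eq_right hu0, max_eq_left (by linarith : u - 1/2 ≤ (0:ℝ))]
      ring
    · rw [min_eq_right (by linarith : (1:ℝ) - 1/2 ≤ u), min_eq_left (by linarith : (1:ℝ) - 1/2 ≤ (1:ℝ)/2),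
        max_eq_right (by linarith : (0:ℝ) ≤ (1:ℝ) - 1/2), max_eq_right (by linarith : (0:ℝ) ≤ u - 1/2)]
      ring
  have hm2 : mm2 l u 1 + mm3 l u 1 + mm2 l 1 u + mm3 l 1 u = u := by
    unfold mm2 mm3
    rw [max_eq_left (by linarith : (1+l)/2 - 1 ≤ (0:ℝ)),
      max_eq_left (by linarith : 1 + l/2 - 1 ≤ l/2),
      min_eq_left (by linarith : l/2 ≤ (1:ℝ)),
      min_eq_left (by linarith : (1:ℝ)/2 ≤ (1:ℝ)),
      max_eq_right (by linarith : l/2 ≤ 1 + l/2 - u)]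
    rcases le_total u (l/2) with h1 | h1
    · rw [min_eq_right h1, min_eq_right (by linarith : u ≤ (1:ℝ)/2),
        max_eq_right (by linarith : (0:ℝ) ≤ u - 0),
        max_eq_left (by linarith : u - l/2 ≤ (0:ℝ)),
        max_eq_right (by linarith : (0:ℝ) ≤ (1+l)/2 - u),
        max_eq_left (by linarith : l/2 - ((1+l)/2 - u) ≤ (0:ℝ)),
        max_eq_left (by linarith : 1/2 - (1 + l/2 - u) ≤ (0:ℝ))]
      ring
    · rcases le_total u (1/2) with h2 | h2
      · rw [min_eq_left h1, min_eq_right h2,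
          max_eq_right (by linarith : (0:ℝ) ≤ l/2 - 0),
          max_eq_right (by linarith : (0:ℝ) ≤ u - l/2),
          max_eq_right (by linarith : (0:ℝ) ≤ (1+l)/2 - u),
          max_eq_left (by linarith : l/2 - ((1+l)/2 - u) ≤ (0:ℝ)),
          max_eq_left (by linarith : 1/2 - (1 + l/2 - u) ≤ (0:ℝ))]
        ring
      · rcases le_total u ((1+l)/2) with h3 | h3
        · rw [min_eq_left h1, min_eq_left h2,
            max_eq_right (by linarith : (0:ℝ) ≤ l/2 - 0),
            max_eq_right (by linarith : (0:ℝ) ≤ 1/2 - l/2),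
            max_eq_right (by linarith : (0:ℝ) ≤ (1+l)/2 - u),
            max_eq_right (by linarith : (0:ℝ) ≤ l/2 - ((1+l)/2 - u)),
            max_eq_left (by linarith : 1/2 - (1 + l/2 - u) ≤ (0:ℝ))]
          ring
        · rw [min_eq_left h1, min_eq_left h2,
            max_eq_right (by linarith : (0:ℝ) ≤ l/2 - 0),
            max_eq_right (by linarith : (0:ℝ) ≤ 1/2 - l/2),
            max_eq_left (by linarith : (1+l)/2 - u ≤ (0:ℝ)),
            max_eq_right (by linarith : (0:ℝ) ≤ l/2 - 0),
            max_eq_right (by linarith : (0:ℝ) ≤ 1/2 - (1 + l/2 - u))]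
          ring
  unfold Cop
  rw [hm1, hm2]
  ring

noncomputable def seg (f : ℝ → ℝ × ℝ) (a b : ℝ) : Measure (ℝ × ℝ) :=
  Measure.map f (volume.restrict (Icc a b))

noncomputable def muF1 (s l : ℝ) : Measure (ℝ × ℝ) :=
  ENNReal.ofReal s • (seg (fun t => (t, t + 1/2)) 0 (1/2) + seg (fun t => (t + 1/2, t)) 0 (1/2))
  + ENNReal.ofReal (1-s) • (seg (fun t => (t, (1+l)/2 - t)) 0 (l/2)
      + seg (fun t => ((1+l)/2 - t, t)) 0 (l/2)
      + seg (fun t => (t, 1 + l/2 - t)) (l/2) (1/2)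
      + seg (fun t => (1 + l/2 - t, t)) (l/2) (1/2))

lemma ofReal_max_zero (x : ℝ) : ENNReal.ofReal (max 0 x) = ENNReal.ofReal x := by
  rcases le_total x 0 with h | h
  · rw [max_eq_left h, ENNReal.ofReal_zero, ENNReal.ofReal_of_nonpos h]
  · rw [max_eq_right h]

lemma seg_apply (f : ℝ → ℝ × ℝ) (hf : Measurable f) (a b : ℝ) (S : Set (ℝ × ℝ))
    (hS : MeasurableSet S) : seg f a b S = volume (f ⁻¹' S ∩ Icc a b) := by
  unfold seg
  rw [Measure.map_apply hf hS, Measure.restrict_apply (hf hS)]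

lemma mRect (u v : ℝ) : MeasurableSet (Icc (0:ℝ) u ×ˢ Icc (0:ℝ) v) :=
  measurableSet_Icc.prod measurableSet_Icc

lemma segL1_rect (u v : ℝ) :
    seg (fun t => (t, t + 1/2)) 0 (1/2) (Icc 0 u ×ˢ Icc 0 v) = ENNReal.ofReal (mm1 u v) := by
  rw [seg_apply _ (by fun_prop) _ _ _ (mRect u v)]
  have hset : (fun t : ℝ => (t, t + 1/2)) ⁻¹' (Icc 0 u ×ˢ Icc 0 v) ∩ Icc 0 (1/2)
      = Icc 0 (min (min u (v - 1/2)) (1/2)) := by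
    ext t
    simp only [mem_inter_iff, mem_preimage, prodMk_mem_set_prod_eq, mem_Icc, le_min_iff]
    constructor
    · rintro ⟨⟨⟨h1, h2⟩, h3, h4⟩, h5, h6⟩
      exact ⟨h1, ⟨h2, by linarith⟩, h6⟩
    · rintro ⟨h1, ⟨h2, h3⟩, h4⟩
      exact ⟨⟨⟨h1, h2⟩, by linarith, by linarith⟩, h1, h4⟩
  rw [hset, Real.volume_Icc, ← ofReal_max_zero]
  unfold mm1; norm_num

lemma segR1_rect (u v : ℝ) :
    seg (fun t => (t + 1/2, t)) 0 (1/2) (Icc 0 u ×ˢ Icc 0 v) = ENNReal.ofReal (mm1 v u) := by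
  rw [seg_apply _ (by fun_prop) _ _ _ (mRect u v)]
  have hset : (fun t : ℝ => (t + 1/2, t)) ⁻¹' (Icc 0 u ×ˢ Icc 0 v) ∩ Icc 0 (1/2)
      = Icc 0 (min (min v (u - 1/2)) (1/2)) := by
    ext t
    simp only [mem_inter_iff, mem_preimage, prodMk_mem_set_prod_eq, mem_Icc, le_min_iff]
    constructor
    · rintro ⟨⟨⟨h1, h2⟩, h3, h4⟩, h5, h6⟩
      exact ⟨h3, ⟨h4, by linarith⟩, h6⟩
    · rintro ⟨h1, ⟨h2, h3⟩, h4⟩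
      exact ⟨⟨⟨by linarith, by linarith⟩, h1, h2⟩, h1, h4⟩
  rw [hset, Real.volume_Icc, ← ofReal_max_zero]
  unfold mm1; norm_num

lemma segL2_rect {l : ℝ} (hl0 : 0 ≤ l) (u v : ℝ) :
    seg (fun t => (t, (1+l)/2 - t)) 0 (l/2) (Icc 0 u ×ˢ Icc 0 v)
      = ENNReal.ofReal (mm2 l u v) := by
  rw [seg_apply _ (by fun_prop) _ _ _ (mRect u v)]
  have hset : (fun t : ℝ => (t, (1+l)/2 - t)) ⁻¹' (Icc 0 u ×ˢ Icc 0 v) ∩ Icc 0 (l/2)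
      = Icc (max 0 ((1+l)/2 - v)) (min (l/2) u) := by
    ext t
    simp only [mem_inter_iff, mem_preimage, prodMk_mem_set_prod_eq, mem_Icc, le_min_iff,
      max_le_iff]
    constructor
    · rintro ⟨⟨⟨h1, h2⟩, h3, h4⟩, h5, h6⟩
      exact ⟨⟨h1, by linarith⟩, h6, h2⟩
    · rintro ⟨⟨h1, h2⟩, h3, h4⟩
      exact ⟨⟨⟨h1, h4⟩, by linarith, by linarith⟩, h1, h3⟩
  rw [hset, Real.volume_Icc, ← ofReal_max_zero]
  unfold mm2; norm_num
lemma segR2_rect {l : ℝ} (hl0 : 0 ≤ l) (u v : ℝ) :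
    seg (fun t => ((1+l)/2 - t, t)) 0 (l/2) (Icc 0 u ×ˢ Icc 0 v)
      = ENNReal.ofReal (mm2 l v u) := by
  rw [seg_apply _ (by fun_prop) _ _ _ (mRect u v)]
  have hset : (fun t : ℝ => ((1+l)/2 - t, t)) ⁻¹' (Icc 0 u ×ˢ Icc 0 v) ∩ Icc 0 (l/2)
      = Icc (max 0 ((1+l)/2 - u)) (min (l/2) v) := by
    ext t
    simp only [mem_inter_iff, mem_preimage, prodMk_mem_set_prod_eq, mem_Icc, le_min_iff,
      max_le_iff]
    constructor
    · rintro ⟨⟨⟨h1, h2⟩, h3, h4⟩, h5, h6⟩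
      exact ⟨⟨h3, by linarith⟩, h6, h4⟩
    · rintro ⟨⟨h1, h2⟩, h3, h4⟩
      exact ⟨⟨⟨by linarith, by linarith⟩, h1, h4⟩, h1, h3⟩
  rw [hset, Real.volume_Icc, ← ofReal_max_zero]
  unfold mm2; norm_num

lemma segL3_rect {l : ℝ} (hl0 : 0 ≤ l) (hl1 : l ≤ 1/2) (u v : ℝ) :
    seg (fun t => (t, 1 + l/2 - t)) (l/2) (1/2) (Icc 0 u ×ˢ Icc 0 v)
      = ENNReal.ofReal (mm3 l u v) := by
  rw [seg_apply _ (by fun_prop) _ _ _ (mRect u v)]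
  have hset : (fun t : ℝ => (t, 1 + l/2 - t)) ⁻¹' (Icc 0 u ×ˢ Icc 0 v) ∩ Icc (l/2) (1/2)
      = Icc (max (l/2) (1 + l/2 - v)) (min (1/2) u) := by
    ext t
    simp only [mem_inter_iff, mem_preimage, prodMk_mem_set_prod_eq, mem_Icc, le_min_iff,
      max_le_iff]
    constructor
    · rintro ⟨⟨⟨h1, h2⟩, h3, h4⟩, h5, h6⟩
      exact ⟨⟨h5, by linarith⟩, h6, h2⟩
    · rintro ⟨⟨h1, h2⟩, h3, h4⟩
      exact ⟨⟨⟨by linarith, h4⟩, by linarith, by linarith⟩, h1, h3⟩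
  rw [hset, Real.volume_Icc, ← ofReal_max_zero]
  unfold mm3; norm_num
lemma segR3_rect {l : ℝ} (hl0 : 0 ≤ l) (hl1 : l ≤ 1/2) (u v : ℝ) :
    seg (fun t => (1 + l/2 - t, t)) (l/2) (1/2) (Icc 0 u ×ˢ Icc 0 v)
      = ENNReal.ofReal (mm3 l v u) := by
  rw [seg_apply _ (by fun_prop) _ _ _ (mRect u v)]
  have hset : (fun t : ℝ => (1 + l/2 - t, t)) ⁻¹' (Icc 0 u ×ˢ Icc 0 v) ∩ Icc (l/2) (1/2)
      = Icc (max (l/2) (1 + l/2 - u)) (min (1/2) v) := by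
    ext t
    simp only [mem_inter_iff, mem_preimage, prodMk_mem_set_prod_eq, mem_Icc, le_min_iff,
      max_le_iff]
    constructor
    · rintro ⟨⟨⟨h1, h2⟩, h3, h4⟩, h5, h6⟩
      exact ⟨⟨h5, by linarith⟩, h6, h4⟩
    · rintro ⟨⟨h1, h2⟩, h3, h4⟩
      exact ⟨⟨⟨by linarith, by linarith⟩, by linarith, h4⟩, h1, h3⟩
  rw [hset, Real.volume_Icc, ← ofReal_max_zero]
  unfold mm3; norm_num

lemma muF1_rect {s l : ℝ} (hs0 : 0 ≤ s) (hs1 : s ≤ 1) (hl0 : 0 ≤ l) (hl1 : l ≤ 1/2)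
    (u v : ℝ) : muF1 s l (Icc 0 u ×ˢ Icc 0 v) = ENNReal.ofReal (Cop s l u v) := by
  have m1a := mm1_nonneg u v; have m1b := mm1_nonneg v u
  have m2a := mm2_nonneg l u v; have m2b := mm2_nonneg l v u
  have m3a := mm3_nonneg l u v; have m3b := mm3_nonneg l v u
  unfold muF1
  rw [Measure.add_apply, Measure.smul_apply, Measure.smul_apply, smul_eq_mul, smul_eq_mul,
    Measure.add_apply, Measure.add_apply, Measure.add_apply, Measure.add_apply,
    segL1_rect, segR1_rect, segL2_rect hl0, segR2_rect hl0, segL3_rect hl0 hl1,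
    segR3_rect hl0 hl1,
    ← ENNReal.ofReal_add m1a m1b, ← ENNReal.ofReal_mul hs0,
    ← ENNReal.ofReal_add m2a m2b, ← ENNReal.ofReal_add (by linarith) m3a,
    ← ENNReal.ofReal_add (by linarith) m3b, ← ENNReal.ofReal_mul (by linarith),
    ← ENNReal.ofReal_add (mul_nonneg hs0 (by linarith)) (mul_nonneg (by linarith) (by linarith))]
  unfold Cop
  ring_nf

lemma seg_univ (f : ℝ → ℝ × ℝ) (hf : Measurable f) (a b : ℝ) :
    seg f a b univ = ENNReal.ofReal (b - a) := by
  unfold seg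
  rw [Measure.map_apply hf MeasurableSet.univ, preimage_univ, Measure.restrict_apply_univ,
    Real.volume_Icc]

lemma muF1_prob {s l : ℝ} (hs0 : 0 ≤ s) (hs1 : s ≤ 1) (hl0 : 0 ≤ l) (hl1 : l ≤ 1/2) :
    IsProbabilityMeasure (muF1 s l) := by
  constructor
  unfold muF1
  rw [Measure.add_apply, Measure.smul_apply, Measure.smul_apply, smul_eq_mul, smul_eq_mul,
    Measure.add_apply, Measure.add_apply, Measure.add_apply, Measure.add_apply,
    seg_univ _ (by fun_prop), seg_univ _ (by fun_prop), seg_univ _ (by fun_prop),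
    seg_univ _ (by fun_prop), seg_univ _ (by fun_prop), seg_univ _ (by fun_prop)]
  rw [← ENNReal.ofReal_add (by norm_num) (by norm_num), ← ENNReal.ofReal_mul hs0,
    ← ENNReal.ofReal_add (by linarith) (by linarith),
    ← ENNReal.ofReal_add (by linarith) (by linarith),
    ← ENNReal.ofReal_add (by linarith) (by linarith),
    ← ENNReal.ofReal_mul (by linarith),
    ← ENNReal.ofReal_add (by nlinarith) (by nlinarith)]
  norm_num
  ring

lemma seg_subset_zero (f : ℝ → ℝ × ℝ) (hf : Measurable f) (a b : ℝ) (S : Set (ℝ × ℝ))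
    (hS : MeasurableSet S) (h : ∀ t ∈ Icc a b, f t ∈ S) : seg f a b Sᶜ = 0 := by
  have : seg f a b Sᶜ = volume (f ⁻¹' Sᶜ ∩ Icc a b) := by
    unfold seg
    rw [Measure.map_apply hf hS.compl, Measure.restrict_apply (hf hS.compl)]
  rw [this]
  convert measure_empty
  · rw [eq_empty_iff_forall_notMem]
    rintro t ⟨hc, ht⟩
    exact hc (h t ht)
  · infer_instance

lemma muF1_compl_zero {s l : ℝ} (hl0 : 0 ≤ l) (hl1 : l ≤ 1/2) :
    muF1 s l ((Icc (0:ℝ) 1 ×ˢ Icc (0:ℝ) 1)ᶜ) = 0 := by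
  have hS : MeasurableSet (Icc (0:ℝ) 1 ×ˢ Icc (0:ℝ) 1) :=
    measurableSet_Icc.prod measurableSet_Icc
  unfold muF1
  rw [Measure.add_apply, Measure.smul_apply, Measure.smul_apply, smul_eq_mul, smul_eq_mul,
    Measure.add_apply, Measure.add_apply, Measure.add_apply, Measure.add_apply,
    seg_subset_zero _ (by fun_prop) _ _ _ hS (by rintro t ⟨h1, h2⟩; constructor <;> constructor <;> simp <;> linarith),
    seg_subset_zero _ (by fun_prop) _ _ _ hS (by rintro t ⟨h1, h2⟩; constructor <;> constructor <;> simp <;> linarith),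
    seg_subset_zero _ (by fun_prop) _ _ _ hS (by rintro t ⟨h1, h2⟩; constructor <;> constructor <;> simp <;> linarith),
    seg_subset_zero _ (by fun_prop) _ _ _ hS (by rintro t ⟨h1, h2⟩; constructor <;> constructor <;> simp <;> linarith),
    seg_subset_zero _ (by fun_prop) _ _ _ hS (by rintro t ⟨h1, h2⟩; constructor <;> constructor <;> simp <;> linarith),
    seg_subset_zero _ (by fun_prop) _ _ _ hS (by rintro t ⟨h1, h2⟩; constructor <;> constructor <;> simp <;> linarith)]
  simp

lemma Cop_2increasing {s l : ℝ} (hs0 : 0 ≤ s) (hs1 : s ≤ 1) (hl0 : 0 ≤ l) (hl1 : l ≤ 1/2)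
    {u1 u2 v1 v2 : ℝ} (hu : u1 ≤ u2) (hv : v1 ≤ v2) :
    0 ≤ Cop s l u2 v2 - Cop s l u2 v1 - Cop s l u1 v2 + Cop s l u1 v1 := by
  set μ := muF1 s l
  have hAB : Icc (0:ℝ) u1 ⊆ Icc 0 u2 := Icc_subset_Icc le_rfl hu
  have hBB : Icc (0:ℝ) v1 ⊆ Icc 0 v2 := Icc_subset_Icc le_rfl hv
  have key : μ (Icc 0 u2 ×ˢ Icc 0 v1) + μ (Icc 0 u1 ×ˢ Icc 0 v2)
      ≤ μ (Icc 0 u2 ×ˢ Icc 0 v2) + μ (Icc 0 u1 ×ˢ Icc 0 v1) := by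
    have hunion := measure_union_add_inter (μ := μ) (Icc 0 u2 ×ˢ Icc 0 v1)
      (measurableSet_Icc.prod measurableSet_Icc : MeasurableSet (Icc (0:ℝ) u1 ×ˢ Icc (0:ℝ) v2))
    rw [prod_inter_prod, inter_eq_self_of_subset_right hAB, inter_eq_self_of_subset_left hBB]
      at hunion
    have hsub : (Icc (0:ℝ) u2 ×ˢ Icc (0:ℝ) v1) ∪ (Icc (0:ℝ) u1 ×ˢ Icc (0:ℝ) v2)
        ⊆ Icc 0 u2 ×ˢ Icc 0 v2 := by
      apply union_subset
      · exact prod_mono subset_rfl hBB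
      · exact prod_mono hAB subset_rfl
    calc μ (Icc 0 u2 ×ˢ Icc 0 v1) + μ (Icc 0 u1 ×ˢ Icc 0 v2)
        = μ ((Icc 0 u2 ×ˢ Icc 0 v1) ∪ (Icc 0 u1 ×ˢ Icc 0 v2)) + μ (Icc 0 u1 ×ˢ Icc 0 v1) :=
          hunion.symm
      _ ≤ μ (Icc 0 u2 ×ˢ Icc 0 v2) + μ (Icc 0 u1 ×ˢ Icc 0 v1) := by
          exact add_le_add (measure_mono hsub) le_rfl
  rw [muF1_rect hs0 hs1 hl0 hl1, muF1_rect hs0 hs1 hl0 hl1, muF1_rect hs0 hs1 hl0 hl1,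
    muF1_rect hs0 hs1 hl0 hl1,
    ← ENNReal.ofReal_add (Cop_nonneg hs0 hs1 _ _) (Cop_nonneg hs0 hs1 _ _),
    ← ENNReal.ofReal_add (Cop_nonneg hs0 hs1 _ _) (Cop_nonneg hs0 hs1 _ _),
    ENNReal.ofReal_le_ofReal_iff
      (add_nonneg (Cop_nonneg hs0 hs1 _ _) (Cop_nonneg hs0 hs1 _ _))] at key
  linarith

lemma integral_linear (a b c d : ℝ) :
    (∫ x in a..b, (c * x + d)) = c * (b^2 - a^2)/2 + d * (b - a) := by
  have h1 : IntervalIntegrable (fun x : ℝ => c * x) volume a b :=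
    (continuous_const.mul continuous_id).intervalIntegrable a b
  rw [intervalIntegral.integral_add h1 intervalIntegrable_const,
    intervalIntegral.integral_const_mul, integral_id, intervalIntegral.integral_const,
    smul_eq_mul]
  ring

lemma Cop_diag1 {s l : ℝ} (hl0 : 0 ≤ l) {x : ℝ} (hx0 : 0 ≤ x) (hx1 : x ≤ 1/2) :
    Cop s l x x = 0 := by
  have h1 : mm1 x x = 0 := by
    unfold mm1
    refine max_eq_left ?_
    have := min_le_right (min x (x - 1/2)) (1/2)
    have := min_le_left (min x (x - 1/2)) (1/2)
    have := min_le_right x (x - 1/2)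
    linarith
  have h2 : mm2 l x x = 0 := by
    unfold mm2
    refine max_eq_left ?_
    have := min_le_left (l/2) x
    have := le_max_right (0:ℝ) ((1+l)/2 - x)
    linarith
  have h3 : mm3 l x x = 0 := by
    unfold mm3
    refine max_eq_left ?_
    have := min_le_right (1/2:ℝ) x
    have := le_max_right (l/2) (1 + l/2 - x)
    linarith
  unfold Cop; rw [h1, h2, h3]; ring

lemma Cop_diag2 {s l : ℝ} (hl0 : 0 ≤ l) (hl1 : l ≤ 1/2) {x : ℝ} (hx0 : 1/2 ≤ x)
    (hx1 : x ≤ (1+l)/2) : Cop s l x x = 2*x - 1 := by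
  have h1 : mm1 x x = x - 1/2 := by
    unfold mm1
    rw [min_eq_right (show x - 1/2 ≤ x by linarith),
      min_eq_left (show x - 1/2 ≤ (1:ℝ)/2 by linarith),
      max_eq_right (show (0:ℝ) ≤ x - 1/2 by linarith)]
  have h2 : mm2 l x x = x - 1/2 := by
    unfold mm2
    rw [min_eq_left (by linarith), max_eq_right (by linarith : (0:ℝ) ≤ (1+l)/2 - x),
      max_eq_right (by linarith)]
    ring
  have h3 : mm3 l x x = 0 := by
    unfold mm3
    rw [min_eq_left (by linarith), max_eq_right (by linarith : l/2 ≤ 1 + l/2 - x)]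
    refine max_eq_left (by linarith)
  unfold Cop; rw [h1, h2, h3]; ring

lemma Cop_diag3 {s l : ℝ} (hl0 : 0 ≤ l) (hl1 : l ≤ 1/2) {x : ℝ} (hx0 : (1+l)/2 ≤ x)
    (hx1 : x ≤ 1) : Cop s l x x = 2*x - 1 := by
  have h1 : mm1 x x = x - 1/2 := by
    unfold mm1
    rw [min_eq_right (show x - 1/2 ≤ x by linarith),
      min_eq_left (show x - 1/2 ≤ (1:ℝ)/2 by linarith),
      max_eq_right (show (0:ℝ) ≤ x - 1/2 by linarith)]
  have h2 : mm2 l x x = l/2 := by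
    unfold mm2
    rw [min_eq_left (by linarith), max_eq_left (by linarith : (1+l)/2 - x ≤ (0:ℝ)),
      max_eq_right (by linarith)]
    ring
  have h3 : mm3 l x x = x - 1/2 - l/2 := by
    unfold mm3
    rw [min_eq_left (by linarith), max_eq_right (by linarith : l/2 ≤ 1 + l/2 - x),
      max_eq_right (by linarith)]
    ring
  unfold Cop; rw [h1, h2, h3]; ring

lemma Cop_diag_integral {s l : ℝ} (hl0 : 0 ≤ l) (hl1 : l ≤ 1/2) :
    (∫ u in (0:ℝ)..1, Cop s l u u) = 1/4 := by
  have hcont : Continuous fun u : ℝ => Cop s l u u :=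
    (Cop_continuous s l).comp (continuous_id.prodMk continuous_id)
  have hii : ∀ a b : ℝ, IntervalIntegrable (fun u => Cop s l u u) volume a b :=
    fun a b => hcont.intervalIntegrable a b
  rw [← intervalIntegral.integral_add_adjacent_intervals (hii 0 (1/2)) (hii (1/2) 1),
    ← intervalIntegral.integral_add_adjacent_intervals (hii (1/2) ((1+l)/2)) (hii ((1+l)/2) 1)]
  have e1 : (∫ u in (0:ℝ)..(1/2), Cop s l u u) = ∫ u in (0:ℝ)..(1/2), ((0:ℝ) * u + 0) := by
    apply intervalIntegral.integral_congr
    intro x hx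
    rw [uIcc_of_le (by norm_num)] at hx
    show Cop s l x x = 0 * x + 0
    rw [Cop_diag1 hl0 hx.1 hx.2]; ring
  have e2 : (∫ u in (1/2:ℝ)..((1+l)/2), Cop s l u u)
      = ∫ u in (1/2:ℝ)..((1+l)/2), ((2:ℝ) * u + (-1)) := by
    apply intervalIntegral.integral_congr
    intro x hx
    rw [uIcc_of_le (by linarith)] at hx
    show Cop s l x x = 2 * x + -1
    rw [Cop_diag2 hl0 hl1 hx.1 hx.2]; ring
  have e3 : (∫ u in ((1+l)/2 : ℝ)..1, Cop s l u u)
      = ∫ u in ((1+l)/2 : ℝ)..1, ((2:ℝ) * u + (-1)) := by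
    apply intervalIntegral.integral_congr
    intro x hx
    rw [uIcc_of_le (by linarith)] at hx
    show Cop s l x x = 2 * x + -1
    rw [Cop_diag3 hl0 hl1 hx.1 hx.2]; ring
  rw [e1, e2, e3, integral_linear, integral_linear, integral_linear]
  ring

section anti
variable {s l : ℝ} (hl0 : 0 ≤ l) (hl1 : l ≤ 1/2)

include hl0 in
lemma anti_zeros {x : ℝ} (hx0 : 0 ≤ x) (hx1 : x ≤ 1/2) :
    mm1 (1-x) x = 0 ∧ mm3 l x (1-x) = 0 ∧ mm2 l (1-x) x = 0 ∧ mm3 l (1-x) x = 0 := by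
  refine ⟨?_, ?_, ?_, ?_⟩
  · refine max_eq_left ?_
    have := min_le_right (min (1-x) (x - 1/2)) (1/2)
    have := min_le_left (min (1-x) (x - 1/2)) (1/2)
    have := min_le_right (1-x) (x - 1/2)
    linarith
  · refine max_eq_left ?_
    have := min_le_right (1/2:ℝ) x
    have := le_max_right (l/2) (1 + l/2 - (1-x))
    linarith
  · refine max_eq_left ?_
    have := min_le_left (l/2) (1-x)
    have := le_max_right (0:ℝ) ((1+l)/2 - x)
    linarith
  · refine max_eq_left ?_
    have := min_le_left (1/2:ℝ) (1-x)
    have := le_max_right (l/2) (1 + l/2 - x)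
    linarith

include hl0 hl1 in
lemma Cop_anti1 {x : ℝ} (hx0 : 0 ≤ x) (hx1 : x ≤ l/2) : Cop s l x (1-x) = x := by
  obtain ⟨z1, z2, z3, z4⟩ := anti_zeros hl0 hx0 (by linarith)
  have h1 : mm1 x (1-x) = x := by
    unfold mm1
    rw [min_eq_left (show x ≤ 1 - x - 1/2 by linarith),
      min_eq_left (show x ≤ (1:ℝ)/2 by linarith), max_eq_right hx0]
  have h2 : mm2 l x (1-x) = x := by
    unfold mm2
    rw [min_eq_right hx1, max_eq_left (show (1+l)/2 - (1-x) ≤ (0:ℝ) by linarith),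
      max_eq_right (show (0:ℝ) ≤ x - 0 by linarith)]
    ring
  unfold Cop; rw [h1, h2, z1, z2, z3, z4]; ring

include hl0 hl1 in
lemma Cop_anti2 {x : ℝ} (hx0 : l/2 ≤ x) (hx1 : x ≤ 1/4) :
    Cop s l x (1-x) = s * x + (1-s) * (l/2) := by
  obtain ⟨z1, z2, z3, z4⟩ := anti_zeros hl0 (by linarith) (by linarith)
  have h1 : mm1 x (1-x) = x := by
    unfold mm1
    rw [min_eq_left (show x ≤ 1 - x - 1/2 by linarith),
      min_eq_left (show x ≤ (1:ℝ)/2 by linarith), max_eq_right (by linarith)]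
  have h2 : mm2 l x (1-x) = l/2 := by
    unfold mm2
    rw [min_eq_left hx0, max_eq_left (show (1+l)/2 - (1-x) ≤ (0:ℝ) by linarith),
      max_eq_right (show (0:ℝ) ≤ l/2 - 0 by linarith)]
    ring
  unfold Cop; rw [h1, h2, z1, z2, z3, z4]; ring

include hl0 hl1 in
lemma Cop_anti3 {x : ℝ} (hx0 : 1/4 ≤ x) (hx1 : x ≤ (1-l)/2) :
    Cop s l x (1-x) = s * (1/2 - x) + (1-s) * (l/2) := by
  obtain ⟨z1, z2, z3, z4⟩ := anti_zeros hl0 (by linarith) (by linarith)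
  have h1 : mm1 x (1-x) = 1 - x - 1/2 := by
    unfold mm1
    rw [min_eq_right (show 1 - x - 1/2 ≤ x by linarith),
      min_eq_left (show 1 - x - 1/2 ≤ (1:ℝ)/2 by linarith),
      max_eq_right (show (0:ℝ) ≤ 1 - x - 1/2 by linarith)]
  have h2 : mm2 l x (1-x) = l/2 := by
    unfold mm2
    rw [min_eq_left (show l/2 ≤ x by linarith),
      max_eq_left (show (1+l)/2 - (1-x) ≤ (0:ℝ) by linarith),
      max_eq_right (show (0:ℝ) ≤ l/2 - 0 by linarith)]
    ring
  unfold Cop; rw [h1, h2, z1, z2, z3, z4]; ring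

include hl0 hl1 in
lemma Cop_anti4 {x : ℝ} (hx0 : (1-l)/2 ≤ x) (hx1 : x ≤ 1/2) : Cop s l x (1-x) = 1/2 - x := by
  obtain ⟨z1, z2, z3, z4⟩ := anti_zeros hl0 (by linarith) hx1
  have h1 : mm1 x (1-x) = 1 - x - 1/2 := by
    unfold mm1
    rw [min_eq_right (show 1 - x - 1/2 ≤ x by linarith),
      min_eq_left (show 1 - x - 1/2 ≤ (1:ℝ)/2 by linarith),
      max_eq_right (show (0:ℝ) ≤ 1 - x - 1/2 by linarith)]
  have h2 : mm2 l x (1-x) = l/2 - ((1+l)/2 - (1-x)) := by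
    unfold mm2
    rw [min_eq_left (show l/2 ≤ x by linarith),
      max_eq_right (show (0:ℝ) ≤ (1+l)/2 - (1-x) by linarith),
      max_eq_right (show (0:ℝ) ≤ l/2 - ((1+l)/2 - (1-x)) by linarith)]
  unfold Cop; rw [h1, h2, z1, z2, z3, z4]; ring

include hl0 hl1 in
lemma Cop_anti_integral :
    (∫ u in (0:ℝ)..1, Cop s l u (1-u)) = s/8 + (1-s) * (l * (1-l))/2 := by
  have hcont : Continuous fun u : ℝ => Cop s l u (1-u) :=
    (Cop_continuous s l).comp (continuous_id.prodMk (continuous_const.sub continuous_id))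
  have hii : ∀ a b : ℝ, IntervalIntegrable (fun u => Cop s l u (1-u)) volume a b :=
    fun a b => hcont.intervalIntegrable a b
  have hsym : (∫ u in (1/2:ℝ)..1, Cop s l u (1-u)) = ∫ u in (0:ℝ)..(1/2), Cop s l u (1-u) := by
    have e : (∫ u in (1/2:ℝ)..1, Cop s l u (1-u))
        = ∫ u in (1/2:ℝ)..1, (fun w => Cop s l w (1-w)) (1-u) := by
      apply intervalIntegral.integral_congr
      intro x _
      show Cop s l x (1-x) = Cop s l (1-x) (1-(1-x))
      rw [show 1-(1-x) = x by ring, Cop_symm]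
    rw [e, intervalIntegral.integral_comp_sub_left (fun w => Cop s l w (1-w)) 1]
    norm_num
  have hsplit : (∫ u in (0:ℝ)..1, Cop s l u (1-u))
      = 2 * ∫ u in (0:ℝ)..(1/2), Cop s l u (1-u) := by
    rw [← intervalIntegral.integral_add_adjacent_intervals (hii 0 (1/2)) (hii (1/2) 1), hsym]
    ring
  rw [hsplit,
    ← intervalIntegral.integral_add_adjacent_intervals (hii 0 (l/2)) (hii (l/2) (1/2)),
    ← intervalIntegral.integral_add_adjacent_intervals (hii (l/2) (1/4)) (hii (1/4) (1/2)),
    ← intervalIntegral.integral_add_adjacent_intervals (hii (1/4) ((1-l)/2)) (hii ((1-l)/2) (1/2))]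
  have e1 : (∫ u in (0:ℝ)..(l/2), Cop s l u (1-u)) = ∫ u in (0:ℝ)..(l/2), ((1:ℝ) * u + 0) := by
    apply intervalIntegral.integral_congr
    intro x hx
    rw [uIcc_of_le (by linarith)] at hx
    show Cop s l x (1-x) = 1 * x + 0
    rw [Cop_anti1 hl0 hl1 hx.1 hx.2]; ring
  have e2 : (∫ u in (l/2:ℝ)..(1/4), Cop s l u (1-u))
      = ∫ u in (l/2:ℝ)..(1/4), (s * u + (1-s) * (l/2)) := by
    apply intervalIntegral.integral_congr
    intro x hx
    rw [uIcc_of_le (by linarith)] at hx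
    show Cop s l x (1-x) = s * x + (1-s) * (l/2)
    rw [Cop_anti2 hl0 hl1 hx.1 hx.2]
  have e3 : (∫ u in (1/4:ℝ)..((1-l)/2), Cop s l u (1-u))
      = ∫ u in (1/4:ℝ)..((1-l)/2), ((-s) * u + (s/2 + (1-s) * (l/2))) := by
    apply intervalIntegral.integral_congr
    intro x hx
    rw [uIcc_of_le (by linarith)] at hx
    show Cop s l x (1-x) = (-s) * x + (s/2 + (1-s) * (l/2))
    rw [Cop_anti3 hl0 hl1 hx.1 hx.2]; ring
  have e4 : (∫ u in ((1-l)/2 : ℝ)..(1/2), Cop s l u (1-u))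
      = ∫ u in ((1-l)/2 : ℝ)..(1/2), ((-1:ℝ) * u + 1/2) := by
    apply intervalIntegral.integral_congr
    intro x hx
    rw [uIcc_of_le (by linarith)] at hx
    show Cop s l x (1-x) = (-1) * x + 1/2
    rw [Cop_anti4 hl0 hl1 hx.1 hx.2]; ring
  have e2' : (∫ u in (l/2:ℝ)..(1/4), (s * u + (1-s) * (l/2)))
      = s * ((1/4:ℝ)^2 - (l/2)^2)/2 + ((1-s) * (l/2)) * (1/4 - l/2) := integral_linear _ _ _ _
  rw [e1, e2, e3, e4, integral_linear, integral_linear, integral_linear, integral_linear]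
  ring

end anti

section kpieces
variable {s l : ℝ} (hl0 : 0 ≤ l) (hl1 : l ≤ 1/2)

-- J1 : along (t, t+1/2), t ∈ [0,1/2]
include hl0 in
lemma kJ1_zeros {t : ℝ} (ht0 : 0 ≤ t) (ht1 : t ≤ 1/2) :
    mm1 (t+1/2) t = 0 ∧ mm2 l (t+1/2) t = 0 ∧ mm3 l (t+1/2) t = 0 ∧ mm1 t (t+1/2) = t := by
  refine ⟨?_, ?_, ?_, ?_⟩
  · refine max_eq_left ?_
    have := min_le_right (min (t+1/2) (t - 1/2)) (1/2)
    have := min_le_left (min (t+1/2) (t - 1/2)) (1/2)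
    have := min_le_right (t+1/2) (t - 1/2)
    linarith
  · refine max_eq_left ?_
    have := min_le_left (l/2) (t+1/2)
    have := le_max_right (0:ℝ) ((1+l)/2 - t)
    linarith
  · refine max_eq_left ?_
    have := min_le_left (1/2:ℝ) (t+1/2)
    have := le_max_right (l/2) (1 + l/2 - t)
    linarith
  · unfold mm1
    rw [min_eq_left (show t ≤ t + 1/2 - 1/2 by linarith),
      min_eq_left (show t ≤ (1:ℝ)/2 by linarith), max_eq_right ht0]

include hl0 hl1 in
lemma Cop_kJ1_1 {t : ℝ} (ht0 : 0 ≤ t) (ht1 : t ≤ l/4) : Cop s l t (t+1/2) = s * t := by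
  obtain ⟨z1, z2, z3, h1⟩ := kJ1_zeros hl0 ht0 (by linarith)
  have h2 : mm2 l t (t+1/2) = 0 := by
    unfold mm2
    rw [min_eq_right (show t ≤ l/2 by linarith),
      max_eq_right (show (0:ℝ) ≤ (1+l)/2 - (t+1/2) by linarith)]
    exact max_eq_left (by linarith)
  have h3 : mm3 l t (t+1/2) = 0 := by
    unfold mm3
    rw [min_eq_right (show t ≤ (1:ℝ)/2 by linarith),
      max_eq_right (show l/2 ≤ 1 + l/2 - (t+1/2) by linarith)]
    exact max_eq_left (by linarith)
  unfold Cop; rw [h1, h2, h3, z1, z2, z3]; ring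

include hl0 hl1 in
lemma Cop_kJ1_2 {t : ℝ} (ht0 : l/4 ≤ t) (ht1 : t ≤ l/2) :
    Cop s l t (t+1/2) = s * t + (1-s) * (2*t - l/2) := by
  obtain ⟨z1, z2, z3, h1⟩ := kJ1_zeros hl0 (by linarith) (by linarith)
  have h2 : mm2 l t (t+1/2) = t - ((1+l)/2 - (t+1/2)) := by
    unfold mm2
    rw [min_eq_right (show t ≤ l/2 by linarith),
      max_eq_right (show (0:ℝ) ≤ (1+l)/2 - (t+1/2) by linarith),
      max_eq_right (show (0:ℝ) ≤ t - ((1+l)/2 - (t+1/2)) by linarith)]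
  have h3 : mm3 l t (t+1/2) = 0 := by
    unfold mm3
    rw [min_eq_right (show t ≤ (1:ℝ)/2 by linarith),
      max_eq_right (show l/2 ≤ 1 + l/2 - (t+1/2) by linarith)]
    exact max_eq_left (by linarith)
  unfold Cop; rw [h1, h2, h3, z1, z2, z3]; ring

include hl0 hl1 in
lemma Cop_kJ1_3 {t : ℝ} (ht0 : l/2 ≤ t) (ht1 : t ≤ (1+l)/4) :
    Cop s l t (t+1/2) = s * t + (1-s) * (l/2) := by
  obtain ⟨z1, z2, z3, h1⟩ := kJ1_zeros hl0 (by linarith) (by linarith)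
  have h2 : mm2 l t (t+1/2) = l/2 := by
    unfold mm2
    rw [min_eq_left (show l/2 ≤ t by linarith),
      max_eq_left (show (1+l)/2 - (t+1/2) ≤ (0:ℝ) by linarith),
      max_eq_right (show (0:ℝ) ≤ l/2 - 0 by linarith)]
    ring
  have h3 : mm3 l t (t+1/2) = 0 := by
    unfold mm3
    rw [min_eq_right (show t ≤ (1:ℝ)/2 by linarith),
      max_eq_right (show l/2 ≤ 1 + l/2 - (t+1/2) by linarith)]
    exact max_eq_left (by linarith)
  unfold Cop; rw [h1, h2, h3, z1, z2, z3]; ring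

include hl0 hl1 in
lemma Cop_kJ1_4 {t : ℝ} (ht0 : (1+l)/4 ≤ t) (ht1 : t ≤ 1/2) :
    Cop s l t (t+1/2) = s * t + (1-s) * (2*t - 1/2) := by
  obtain ⟨z1, z2, z3, h1⟩ := kJ1_zeros hl0 (by linarith) ht1
  have h2 : mm2 l t (t+1/2) = l/2 := by
    unfold mm2
    rw [min_eq_left (show l/2 ≤ t by linarith),
      max_eq_left (show (1+l)/2 - (t+1/2) ≤ (0:ℝ) by linarith),
      max_eq_right (show (0:ℝ) ≤ l/2 - 0 by linarith)]
    ring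
  have h3 : mm3 l t (t+1/2) = t - (1 + l/2 - (t+1/2)) := by
    unfold mm3
    rw [min_eq_right (show t ≤ (1:ℝ)/2 by linarith),
      max_eq_right (show l/2 ≤ 1 + l/2 - (t+1/2) by linarith),
      max_eq_right (show (0:ℝ) ≤ t - (1 + l/2 - (t+1/2)) by linarith)]
  unfold Cop; rw [h1, h2, h3, z1, z2, z3]; ring

-- J2 : along (t, (1+l)/2 - t), t ∈ [0, l/2]
include hl0 hl1 in
lemma kJ2_zeros {t : ℝ} (ht0 : 0 ≤ t) (ht1 : t ≤ l/2) :
    mm1 ((1+l)/2 - t) t = 0 ∧ mm2 l t ((1+l)/2 - t) = 0 ∧ mm2 l ((1+l)/2 - t) t = 0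
      ∧ mm3 l t ((1+l)/2 - t) = 0 ∧ mm3 l ((1+l)/2 - t) t = 0 := by
  refine ⟨?_, ?_, ?_, ?_, ?_⟩
  · refine max_eq_left ?_
    have := min_le_right (min ((1+l)/2 - t) (t - 1/2)) (1/2)
    have := min_le_left (min ((1+l)/2 - t) (t - 1/2)) (1/2)
    have := min_le_right ((1+l)/2 - t) (t - 1/2)
    linarith
  · refine max_eq_left ?_
    have := min_le_right (l/2) t
    have := le_max_right (0:ℝ) ((1+l)/2 - ((1+l)/2 - t))
    linarith
  · refine max_eq_left ?_
    have := min_le_left (l/2) ((1+l)/2 - t)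
    have := le_max_right (0:ℝ) ((1+l)/2 - t)
    linarith
  · refine max_eq_left ?_
    have := min_le_right (1/2:ℝ) t
    have := le_max_right (l/2) (1 + l/2 - ((1+l)/2 - t))
    linarith
  · refine max_eq_left ?_
    have := min_le_left (1/2:ℝ) ((1+l)/2 - t)
    have := le_max_right (l/2) (1 + l/2 - t)
    linarith

include hl0 hl1 in
lemma Cop_kJ2_1 {t : ℝ} (ht0 : 0 ≤ t) (ht1 : t ≤ l/4) : Cop s l t ((1+l)/2 - t) = s * t := by
  obtain ⟨z1, z2, z3, z4, z5⟩ := kJ2_zeros hl0 hl1 ht0 (by linarith)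
  have h1 : mm1 t ((1+l)/2 - t) = t := by
    unfold mm1
    rw [min_eq_left (show t ≤ (1+l)/2 - t - 1/2 by linarith),
      min_eq_left (show t ≤ (1:ℝ)/2 by linarith), max_eq_right ht0]
  unfold Cop; rw [h1, z1, z2, z3, z4, z5]; ring

include hl0 hl1 in
lemma Cop_kJ2_2 {t : ℝ} (ht0 : l/4 ≤ t) (ht1 : t ≤ l/2) :
    Cop s l t ((1+l)/2 - t) = s * (l/2 - t) := by
  obtain ⟨z1, z2, z3, z4, z5⟩ := kJ2_zeros hl0 hl1 (by linarith) ht1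
  have h1 : mm1 t ((1+l)/2 - t) = (1+l)/2 - t - 1/2 := by
    unfold mm1
    rw [min_eq_right (show (1+l)/2 - t - 1/2 ≤ t by linarith),
      min_eq_left (show (1+l)/2 - t - 1/2 ≤ (1:ℝ)/2 by linarith),
      max_eq_right (show (0:ℝ) ≤ (1+l)/2 - t - 1/2 by linarith)]
  unfold Cop; rw [h1, z1, z2, z3, z4, z5]; ring

-- J3 : along (t, 1 + l/2 - t), t ∈ [l/2, 1/2]
include hl0 hl1 in
lemma kJ3_zeros {t : ℝ} (ht0 : l/2 ≤ t) (ht1 : t ≤ 1/2) :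
    mm1 (1 + l/2 - t) t = 0 ∧ mm2 l (1 + l/2 - t) t = 0 ∧ mm3 l t (1 + l/2 - t) = 0
      ∧ mm3 l (1 + l/2 - t) t = 0 ∧ mm2 l t (1 + l/2 - t) = l/2 := by
  refine ⟨?_, ?_, ?_, ?_, ?_⟩
  · refine max_eq_left ?_
    have := min_le_right (min (1 + l/2 - t) (t - 1/2)) (1/2)
    have := min_le_left (min (1 + l/2 - t) (t - 1/2)) (1/2)
    have := min_le_right (1 + l/2 - t) (t - 1/2)
    linarith
  · refine max_eq_left ?_
    have := min_le_left (l/2) (1 + l/2 - t)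
    have := le_max_right (0:ℝ) ((1+l)/2 - t)
    linarith
  · refine max_eq_left ?_
    have := min_le_right (1/2:ℝ) t
    have := le_max_right (l/2) (1 + l/2 - (1 + l/2 - t))
    linarith
  · refine max_eq_left ?_
    have := min_le_left (1/2:ℝ) (1 + l/2 - t)
    have := le_max_right (l/2) (1 + l/2 - t)
    linarith
  · unfold mm2
    rw [min_eq_left (show l/2 ≤ t by linarith),
      max_eq_left (show (1+l)/2 - (1 + l/2 - t) ≤ (0:ℝ) by linarith),
      max_eq_right (show (0:ℝ) ≤ l/2 - 0 by linarith)]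
    ring

include hl0 hl1 in
lemma Cop_kJ3_1 {t : ℝ} (ht0 : l/2 ≤ t) (ht1 : t ≤ (1+l)/4) :
    Cop s l t (1 + l/2 - t) = s * t + (1-s) * (l/2) := by
  obtain ⟨z1, z2, z3, z4, h2⟩ := kJ3_zeros hl0 hl1 ht0 (by linarith)
  have h1 : mm1 t (1 + l/2 - t) = t := by
    unfold mm1
    rw [min_eq_left (show t ≤ 1 + l/2 - t - 1/2 by linarith),
      min_eq_left (show t ≤ (1:ℝ)/2 by linarith), max_eq_right (by linarith)]
  unfold Cop; rw [h1, h2, z1, z2, z3, z4]; ring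

include hl0 hl1 in
lemma Cop_kJ3_2 {t : ℝ} (ht0 : (1+l)/4 ≤ t) (ht1 : t ≤ 1/2) :
    Cop s l t (1 + l/2 - t) = s * (1/2 + l/2 - t) + (1-s) * (l/2) := by
  obtain ⟨z1, z2, z3, z4, h2⟩ := kJ3_zeros hl0 hl1 (by linarith) ht1
  have h1 : mm1 t (1 + l/2 - t) = 1 + l/2 - t - 1/2 := by
    unfold mm1
    rw [min_eq_right (show 1 + l/2 - t - 1/2 ≤ t by linarith),
      min_eq_left (show 1 + l/2 - t - 1/2 ≤ (1:ℝ)/2 by linarith),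
      max_eq_right (show (0:ℝ) ≤ 1 + l/2 - t - 1/2 by linarith)]
  unfold Cop; rw [h1, h2, z1, z2, z3, z4]; ring

end kpieces

section K
variable {s l : ℝ} (hl0 : 0 ≤ l) (hl1 : l ≤ 1/2) (hs0 : 0 ≤ s) (hs1 : s ≤ 1)
lemma seg_integrable (g : ℝ → ℝ × ℝ) (hg : Continuous g) (a b : ℝ) :
    Integrable (fun p : ℝ × ℝ => Cop s l p.1 p.2) (seg g a b) := by
  unfold seg
  rw [integrable_map_measure ((Cop_continuous s l).aestronglyMeasurable)
    hg.measurable.aemeasurable]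
  exact ((Cop_continuous s l).comp hg).integrableOn_Icc

lemma seg_integral (g : ℝ → ℝ × ℝ) (hg : Continuous g) (a b : ℝ) (hab : a ≤ b) :
    (∫ p, Cop s l p.1 p.2 ∂(seg g a b)) = ∫ t in a..b, Cop s l (g t).1 (g t).2 := by
  unfold seg
  rw [integral_map hg.measurable.aemeasurable ((Cop_continuous s l).aestronglyMeasurable),
    intervalIntegral.integral_of_le hab, ← integral_Icc_eq_integral_Ioc]

include hl0 hl1 hs0 hs1 in
lemma Cop_kendall_integral :
    (∫ p in Icc (0:ℝ) 1 ×ˢ Icc (0:ℝ) 1, Cop s l p.1 p.2 ∂(muF1 s l))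
      = (s + 2*(1-s)*(l*(1-l)))/4 := by
  have hrestrict : (muF1 s l).restrict (Icc (0:ℝ) 1 ×ˢ Icc (0:ℝ) 1) = muF1 s l := by
    apply Measure.restrict_eq_self_of_ae_mem
    rw [ae_iff]
    exact muF1_compl_zero (s := s) hl0 hl1
  rw [hrestrict]
  have hii : ∀ a b : ℝ, ∀ g : ℝ → ℝ, Continuous g →
      IntervalIntegrable (fun t => Cop s l t (g t)) volume a b := by
    intro a b g hg
    exact ((Cop_continuous s l).comp (continuous_id.prodMk hg)).intervalIntegrable a b
  have c1 : Continuous fun t : ℝ => (t, t + 1/2) := by fun_prop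
  have c2 : Continuous fun t : ℝ => (t + 1/2, t) := by fun_prop
  have c3 : Continuous fun t : ℝ => (t, (1+l)/2 - t) := by fun_prop
  have c4 : Continuous fun t : ℝ => ((1+l)/2 - t, t) := by fun_prop
  have c5 : Continuous fun t : ℝ => (t, 1 + l/2 - t) := by fun_prop
  have c6 : Continuous fun t : ℝ => (1 + l/2 - t, t) := by fun_prop
  have i1 := seg_integrable (s := s) (l := l) _ c1 0 (1/2)
  have i2 := seg_integrable (s := s) (l := l) _ c2 0 (1/2)
  have i3 := seg_integrable (s := s) (l := l) _ c3 0 (l/2)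
  have i4 := seg_integrable (s := s) (l := l) _ c4 0 (l/2)
  have i5 := seg_integrable (s := s) (l := l) _ c5 (l/2) (1/2)
  have i6 := seg_integrable (s := s) (l := l) _ c6 (l/2) (1/2)
  unfold muF1
  rw [integral_add_measure ((i1.add_measure i2).smul_measure ENNReal.ofReal_ne_top)
      ((((i3.add_measure i4).add_measure i5).add_measure i6).smul_measure ENNReal.ofReal_ne_top),
    MeasureTheory.integral_smul_measure, MeasureTheory.integral_smul_measure,
    integral_add_measure ((i3.add_measure i4).add_measure i5) i6,
    integral_add_measure (i3.add_measure i4) i5,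
    integral_add_measure i3 i4,
    integral_add_measure i1 i2,
    seg_integral _ c1 0 (1/2) (by norm_num),
    seg_integral _ c2 0 (1/2) (by norm_num),
    seg_integral _ c3 0 (l/2) (by linarith),
    seg_integral _ c4 0 (l/2) (by linarith),
    seg_integral _ c5 (l/2) (1/2) (by linarith),
    seg_integral _ c6 (l/2) (1/2) (by linarith),
    ENNReal.toReal_ofReal hs0, ENNReal.toReal_ofReal (by linarith : (0:ℝ) ≤ 1 - s),
    smul_eq_mul, smul_eq_mul]
  have sym2 : (∫ t in (0:ℝ)..(1/2), Cop s l ((t + 1/2, t)).1 ((t + 1/2, t)).2)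
      = ∫ t in (0:ℝ)..(1/2), Cop s l t (t + 1/2) := by
    apply intervalIntegral.integral_congr
    intro x _
    exact Cop_symm s l (x + 1/2) x
  have sym4 : (∫ t in (0:ℝ)..(l/2), Cop s l (((1+l)/2 - t, t)).1 (((1+l)/2 - t, t)).2)
      = ∫ t in (0:ℝ)..(l/2), Cop s l t ((1+l)/2 - t) := by
    apply intervalIntegral.integral_congr
    intro x _
    exact Cop_symm s l ((1+l)/2 - x) x
  have sym6 : (∫ t in (l/2:ℝ)..(1/2), Cop s l ((1 + l/2 - t, t)).1 ((1 + l/2 - t, t)).2)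
      = ∫ t in (l/2:ℝ)..(1/2), Cop s l t (1 + l/2 - t) := by
    apply intervalIntegral.integral_congr
    intro x _
    exact Cop_symm s l (1 + l/2 - x) x
  rw [sym2, sym4, sym6]
  -- split J1 into four pieces
  have hJ1 : (∫ t in (0:ℝ)..(1/2), Cop s l t (t + 1/2))
      = s/8 + (1-s) * (1 + 2*l - 2*l^2)/16 := by
    rw [← intervalIntegral.integral_add_adjacent_intervals
        (hii 0 ((1+l)/4) _ (by fun_prop)) (hii ((1+l)/4) (1/2) _ (by fun_prop)),
      ← intervalIntegral.integral_add_adjacent_intervals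
        (hii 0 (l/2) _ (by fun_prop)) (hii (l/2) ((1+l)/4) _ (by fun_prop)),
      ← intervalIntegral.integral_add_adjacent_intervals
        (hii 0 (l/4) _ (by fun_prop)) (hii (l/4) (l/2) _ (by fun_prop))]
    have e1 : (∫ t in (0:ℝ)..(l/4), Cop s l t (t + 1/2))
        = ∫ t in (0:ℝ)..(l/4), (s * t + 0) := by
      apply intervalIntegral.integral_congr
      intro x hx
      rw [uIcc_of_le (by linarith)] at hx
      show Cop s l x (x + 1/2) = s * x + 0
      rw [Cop_kJ1_1 hl0 hl1 hx.1 hx.2]; ring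
    have e2 : (∫ t in (l/4:ℝ)..(l/2), Cop s l t (t + 1/2))
        = ∫ t in (l/4:ℝ)..(l/2), ((s + (1-s)*2) * t + (-(1-s) * (l/2))) := by
      apply intervalIntegral.integral_congr
      intro x hx
      rw [uIcc_of_le (by linarith)] at hx
      show Cop s l x (x + 1/2) = (s + (1-s)*2) * x + (-(1-s) * (l/2))
      rw [Cop_kJ1_2 hl0 hl1 hx.1 hx.2]; ring
    have e3 : (∫ t in (l/2:ℝ)..((1+l)/4), Cop s l t (t + 1/2))
        = ∫ t in (l/2:ℝ)..((1+l)/4), (s * t + (1-s) * (l/2)) := by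
      apply intervalIntegral.integral_congr
      intro x hx
      rw [uIcc_of_le (by linarith)] at hx
      show Cop s l x (x + 1/2) = s * x + (1-s) * (l/2)
      rw [Cop_kJ1_3 hl0 hl1 hx.1 hx.2]
    have e4 : (∫ t in ((1+l)/4:ℝ)..(1/2), Cop s l t (t + 1/2))
        = ∫ t in ((1+l)/4:ℝ)..(1/2), ((s + (1-s)*2) * t + (-(1-s)/2)) := by
      apply intervalIntegral.integral_congr
      intro x hx
      rw [uIcc_of_le (by linarith)] at hx
      show Cop s l x (x + 1/2) = (s + (1-s)*2) * x + (-(1-s)/2)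
      rw [Cop_kJ1_4 hl0 hl1 hx.1 hx.2]; ring
    rw [e1, e2, e3, e4, integral_linear, integral_linear, integral_linear, integral_linear]
    ring
  have hJ2 : (∫ t in (0:ℝ)..(l/2), Cop s l t ((1+l)/2 - t)) = s * l^2/16 := by
    rw [← intervalIntegral.integral_add_adjacent_intervals
        (hii 0 (l/4) _ (by fun_prop)) (hii (l/4) (l/2) _ (by fun_prop))]
    have e1 : (∫ t in (0:ℝ)..(l/4), Cop s l t ((1+l)/2 - t))
        = ∫ t in (0:ℝ)..(l/4), (s * t + 0) := by
      apply intervalIntegral.integral_congr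
      intro x hx
      rw [uIcc_of_le (by linarith)] at hx
      show Cop s l x ((1+l)/2 - x) = s * x + 0
      rw [Cop_kJ2_1 hl0 hl1 hx.1 hx.2]; ring
    have e2 : (∫ t in (l/4:ℝ)..(l/2), Cop s l t ((1+l)/2 - t))
        = ∫ t in (l/4:ℝ)..(l/2), ((-s) * t + s * (l/2)) := by
      apply intervalIntegral.integral_congr
      intro x hx
      rw [uIcc_of_le (by linarith)] at hx
      show Cop s l x ((1+l)/2 - x) = (-s) * x + s * (l/2)
      rw [Cop_kJ2_2 hl0 hl1 hx.1 hx.2]; ring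
    rw [e1, e2, integral_linear, integral_linear]
    ring
  have hJ3 : (∫ t in (l/2:ℝ)..(1/2), Cop s l t (1 + l/2 - t))
      = s * ((1 + 2*l - 3*l^2)/16) + (1-s) * (l/2) * ((1-l)/2) := by
    rw [← intervalIntegral.integral_add_adjacent_intervals
        (hii (l/2) ((1+l)/4) _ (by fun_prop)) (hii ((1+l)/4) (1/2) _ (by fun_prop))]
    have e1 : (∫ t in (l/2:ℝ)..((1+l)/4), Cop s l t (1 + l/2 - t))
        = ∫ t in (l/2:ℝ)..((1+l)/4), (s * t + (1-s) * (l/2)) := by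
      apply intervalIntegral.integral_congr
      intro x hx
      rw [uIcc_of_le (by linarith)] at hx
      show Cop s l x (1 + l/2 - x) = s * x + (1-s) * (l/2)
      rw [Cop_kJ3_1 hl0 hl1 hx.1 hx.2]
    have e2 : (∫ t in ((1+l)/4:ℝ)..(1/2), Cop s l t (1 + l/2 - t))
        = ∫ t in ((1+l)/4:ℝ)..(1/2), ((-s) * t + (s * (1/2 + l/2) + (1-s) * (l/2))) := by
      apply intervalIntegral.integral_congr
      intro x hx
      rw [uIcc_of_le (by linarith)] at hx
      show Cop s l x (1 + l/2 - x) = (-s) * x + (s * (1/2 + l/2) + (1-s) * (l/2))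
      rw [Cop_kJ3_2 hl0 hl1 hx.1 hx.2]; ring
    rw [e1, e2, integral_linear, integral_linear]
    ring
  rw [hJ1, hJ2, hJ3]
  ring


set_option maxHeartbeats 1000000 in
/-- Every point of the face F₁ = {p ∈ Ω | φ = −1/2} is attained. -/
theorem exists_copula_face_F1 (p : ℝ × ℝ × ℝ) (hp : p ∈ Omega)
    (hface : p.1 = -(1/2)) :
    ∃ (C : ℝ → ℝ → ℝ) (μ : Measure (ℝ × ℝ)), IsCopula C ∧ IsCopulaMeasure C μ ∧
      footrule C = p.1 ∧ giniGamma C = p.2.1 ∧ kendallTauInt C μ = p.2.2 := by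
  obtain ⟨h1, h2, h3, h4, h5, h6, h7⟩ := hp
  rw [hface] at h2 h6 h7
  have hγ : p.2.1 ≤ -(1/2) := by linarith
  have hγτ : p.2.1 ≤ p.2.2 := by linarith
  have hτγ : p.2.2 ≤ 1 + 2 * p.2.1 := by linarith
  set s : ℝ := 2 * (p.2.2 - p.2.1) with hsdef
  have hs0 : 0 ≤ s := by simp only [hsdef]; linarith
  have hs1 : s ≤ 1 := by simp only [hsdef]; linarith
  set q : ℝ := if s = 1 then 0 else (1 + 2*p.2.1 - p.2.2)/(2*(1-s)) with hqdef
  have hnum0 : 0 ≤ 1 + 2*p.2.1 - p.2.2 := by linarith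
  have hq0 : 0 ≤ q := by
    simp only [hqdef]
    split_ifs with h
    · exact le_refl 0
    · have hslt : s < 1 := lt_of_le_of_ne hs1 h
      exact div_nonneg hnum0 (by linarith)
  have hq14 : q ≤ 1/4 := by
    simp only [hqdef]
    split_ifs with h
    · norm_num
    · have hslt : s < 1 := lt_of_le_of_ne hs1 h
      rw [div_le_iff₀ (by linarith)]
      simp only [hsdef]
      linarith
  have hqid : 2*(1-s)*q = 1 + 2*p.2.1 - p.2.2 := by
    simp only [hqdef]
    split_ifs with h
    · have : s = 1 := h
      have h12 : p.2.2 - p.2.1 = 1/2 := by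
        simp only [hsdef] at this; linarith
      have : 1 + 2*p.2.1 - p.2.2 ≤ 0 := by linarith
      linarith
    · have hslt : s < 1 := lt_of_le_of_ne hs1 h
      rw [mul_comm]
      exact div_mul_cancel₀ _ (ne_of_gt (by linarith : (0:ℝ) < 2*(1-s)))
  set l : ℝ := (1 - Real.sqrt (1 - 4*q))/2 with hldef
  have hsq : Real.sqrt (1-4*q)^2 = 1-4*q := Real.sq_sqrt (by linarith)
  have hsqnn : 0 ≤ Real.sqrt (1-4*q) := Real.sqrt_nonneg _
  have hsqle : Real.sqrt (1-4*q) ≤ 1 := by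
    calc Real.sqrt (1-4*q) ≤ Real.sqrt 1 := Real.sqrt_le_sqrt (by linarith)
    _ = 1 := Real.sqrt_one
  have hl0 : 0 ≤ l := by simp only [hldef]; linarith
  have hl1 : l ≤ 1/2 := by simp only [hldef]; linarith
  have hlq : l * (1 - l) = q := by
    simp only [hldef]
    nlinarith [hsq]
  refine ⟨Cop s l, muF1 s l, ⟨?_, ?_, ?_, ?_, ?_⟩, ⟨muF1_prob hs0 hs1 hl0 hl1, ?_⟩, ?_, ?_, ?_⟩
  · intro v hv
    rw [Cop_symm]
    exact Cop_zero_right hl0 hl1 v hv.1 hv.2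
  · intro u hu
    exact Cop_zero_right hl0 hl1 u hu.1 hu.2
  · intro u hu
    exact Cop_one_right hl0 hl1 u hu.1 hu.2
  · intro v hv
    rw [Cop_symm]
    exact Cop_one_right hl0 hl1 v hv.1 hv.2
  · intro u1 u2 v1 v2 _ hu12 _ _ hv12 _
    exact Cop_2increasing hs0 hs1 hl0 hl1 hu12 hv12
  · intro u _ v _
    exact muF1_rect hs0 hs1 hl0 hl1 u v
  · unfold footrule
    rw [Cop_diag_integral hl0 hl1, hface]
    norm_num
  · unfold giniGamma
    rw [Cop_diag_integral hl0 hl1, Cop_anti_integral hl0 hl1, hlq]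
    simp only [hsdef] at hqid ⊢
    nlinarith [hqid]
  · unfold kendallTauInt
    rw [Cop_kendall_integral hl0 hl1 hs0 hs1, hlq]
    simp only [hsdef] at hqid ⊢
    nlinarith [hqid]
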